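/- arXiv:1510.07804 — 3 statements merged into one kernel-verified Lean document; each statement's English description precedes it below -/
import Mathlib

section
/- Lemma 2.5(1): Let (A, m) be a local noetherian ring, let L →^α M →^β N and L →^{α'} M →^{β'} N be two complexes of finite A-modules (i.e., β∘α = 0 and β'∘α' = 0), and let c be a positive integer. Assume that (a) the first sequence is exact at M (im α = ker β), (b) the two complexes agree modulo m^{c+1}, i.e., (α − α')(L) ⊆ m^{c+1}M and (β − β')(M) ⊆ m^{c+1}N, and (c) the condition (AR)_c holds for α and for β. Then (AR)_c holds for β', i.e., β'(M) ∩ m^n N ⊆ β'(m^{n−c}M) for all n ≥ c. -/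
open IsLocalRing

/-- The Artin–Rees condition `(AR)_c` for a morphism `φ : M → N` of modules over a local
ring `(A, 𝔪)`: for all `n ≥ c`, `φ(M) ∩ 𝔪^n N ⊆ φ(𝔪^(n-c) M)`. -/
def ArtinReesCond {A : Type*} [CommRing A] [IsLocalRing A]
    {M N : Type*} [AddCommGroup M] [Module A M] [AddCommGroup N] [Module A N]
    (c : ℕ) (φ : M →ₗ[A] N) : Prop :=
  ∀ n : ℕ, c ≤ n →
    LinearMap.range φ ⊓ ((maximalIdeal A) ^ n • ⊤ : Submodule A N) ≤
      Submodule.map φ ((maximalIdeal A) ^ (n - c) • ⊤ : Submodule A M)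

/-- If a linear map sends everything into `I • ⊤`, it sends `J • ⊤` into `(J*I) • ⊤`. -/
lemma aux_smul_map {A : Type*} [CommRing A] {M N : Type*} [AddCommGroup M] [Module A M]
    [AddCommGroup N] [Module A N] (f : M →ₗ[A] N) (I J : Ideal A)
    (hf : ∀ x : M, f x ∈ (I • ⊤ : Submodule A N)) {x : M}
    (hx : x ∈ (J • ⊤ : Submodule A M)) : f x ∈ ((J * I) • ⊤ : Submodule A N) := by
  have h1 : f x ∈ Submodule.map f (J • ⊤ : Submodule A M) := ⟨x, hx, rfl⟩
  rw [Submodule.map_smul''] at h1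
  have h2 : Submodule.map f ⊤ ≤ (I • ⊤ : Submodule A N) := by
    rintro y ⟨z, -, rfl⟩; exact hf z
  have := Submodule.smul_mono le_rfl h2 h1
  rwa [← Submodule.smul_assoc, Ideal.smul_eq_mul] at this

/-- Lemma 2.5(1): under the hypotheses of Lemma 2.5, the condition `(AR)_c` holds for `β'`. -/
theorem lemma_2_5_part1 {A : Type*} [CommRing A] [IsLocalRing A] [IsNoetherianRing A]
    {L M N : Type*} [AddCommGroup L] [Module A L] [AddCommGroup M] [Module A M]
    [AddCommGroup N] [Module A N]
    [Module.Finite A L] [Module.Finite A M] [Module.Finite A N]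
    (α α' : L →ₗ[A] M) (β β' : M →ₗ[A] N)
    (hcx : β.comp α = 0) (hcx' : β'.comp α' = 0)
    (c : ℕ) (hc : 0 < c)
    (hexact : LinearMap.range α = LinearMap.ker β)
    (hα : ∀ x : L, α x - α' x ∈ ((maximalIdeal A) ^ (c + 1) • ⊤ : Submodule A M))
    (hβ : ∀ x : M, β x - β' x ∈ ((maximalIdeal A) ^ (c + 1) • ⊤ : Submodule A N))
    (hARα : ArtinReesCond c α) (hARβ : ArtinReesCond c β) :
    ArtinReesCond c β' := by
  set m := maximalIdeal A with hm
  -- auxiliary claim, by induction on n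
  have key : ∀ n : ℕ, c ≤ n → ∀ x : M, β' x ∈ (m ^ n • ⊤ : Submodule A N) →
      ∃ x' ∈ (m ^ (n - c) • ⊤ : Submodule A M), β' x' = β' x := by
    intro n hn
    induction n, hn using Nat.le_induction with
    | base =>
      intro x hx
      refine ⟨x, ?_, rfl⟩
      simp [Nat.sub_self, Ideal.one_eq_top]
    | succ n hn IH =>
      intro x hx
      -- step 1: use IH to get x₀ ∈ m^(n-c) M with β' x₀ = β' x
      have hx' : β' x ∈ (m ^ n • ⊤ : Submodule A N) :=
        Submodule.smul_mono_left (Ideal.pow_le_pow_right (Nat.le_succ n)) hx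
      obtain ⟨x₀, hx₀, hx₀eq⟩ := IH x hx'
      -- step 2: β x₀ ∈ m^(n+1) N
      have hδβ : (β - β') x₀ ∈ ((m ^ (n - c) * m ^ (c + 1)) • ⊤ : Submodule A N) :=
        aux_smul_map (β - β') _ _ (fun z => hβ z) hx₀
      have hpow : m ^ (n - c) * m ^ (c + 1) = m ^ (n + 1) := by
        rw [← pow_add]; congr 1; omega
      rw [hpow] at hδβ
      have hβx₀ : β x₀ ∈ (m ^ (n + 1) • ⊤ : Submodule A N) := by
        have : β x₀ = (β - β') x₀ + β' x₀ := by simp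
        rw [this, hx₀eq]
        exact Submodule.add_mem _ hδβ hx
      -- step 3: apply (AR)_c for β
      obtain ⟨x₁, hx₁, hx₁eq⟩ := hARβ (n + 1) (by omega) ⟨⟨x₀, rfl⟩, hβx₀⟩
      -- step 4: x₀ - x₁ ∈ ker β = range α
      have hker : x₀ - x₁ ∈ LinearMap.ker β := by
        simp [LinearMap.mem_ker, map_sub, hx₁eq]
      obtain ⟨l, hl⟩ : x₀ - x₁ ∈ LinearMap.range α := hexact ▸ hker
      -- step 5: x₀ - x₁ ∈ m^(n-c) M
      have hx₁' : x₁ ∈ (m ^ (n - c) • ⊤ : Submodule A M) :=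
        Submodule.smul_mono_left (Ideal.pow_le_pow_right (by omega)) hx₁
      have hdiff : α l ∈ (m ^ (n - c) • ⊤ : Submodule A M) := by
        rw [hl]; exact Submodule.sub_mem _ hx₀ hx₁'
      -- step 6: find l' with α l' = α l and (α - α') l' ∈ m^(n+1-c) M
      have hstep : ∃ v ∈ (m ^ (n + 1 - c) • ⊤ : Submodule A M), β' v = β' (α l) := by
        rcases le_or_gt (2 * c) n with h2c | h2c
        · -- apply (AR)_c for α
          obtain ⟨l', hl', hl'eq⟩ := hARα (n - c) (by omega) ⟨⟨l, rfl⟩, hdiff⟩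
          refine ⟨(α - α') l', ?_, ?_⟩
          · have := aux_smul_map (α - α') _ _ (fun z => hα z) hl'
            have hpow2 : m ^ (n - c - c) * m ^ (c + 1) = m ^ (n + 1 - c) := by
              rw [← pow_add]; congr 1; omega
            rwa [hpow2] at this
          · have hα'l' : β' (α' l') = 0 := by
              have := congrFun (congrArg DFunLike.coe hcx') l'
              simpa using this
            simp only [LinearMap.sub_apply, map_sub, hα'l', sub_zero, hl'eq]
        · -- n < 2c : use l' = l directly
          refine ⟨(α - α') l, ?_, ?_⟩
          · exact Submodule.smul_mono_left (Ideal.pow_le_pow_right (by omega)) (hα l)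
          · have hα'l : β' (α' l) = 0 := by
              have := congrFun (congrArg DFunLike.coe hcx') l
              simpa using this
            simp only [LinearMap.sub_apply, map_sub, hα'l, sub_zero]
      obtain ⟨v, hv, hveq⟩ := hstep
      -- step 7: conclude
      refine ⟨x₁ + v, Submodule.add_mem _ hx₁ hv, ?_⟩
      rw [map_add, hveq, ← map_add, hl]
      rw [show x₁ + (x₀ - x₁) = x₀ from by abel, hx₀eq]
  intro n hn y hy
  obtain ⟨⟨x, rfl⟩, hy2⟩ := hy
  obtain ⟨x', hx', heq⟩ := key n hn x hy2
  exact ⟨x', hx', heq⟩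
end

section
/- Lemma 2.5(3): Let (A, m) be a local noetherian ring, let L →^α M →^β N and L →^{α'} M →^{β'} N be two complexes of finite A-modules (i.e., β∘α = 0 and β'∘α' = 0), and let c be a positive integer. Assume that (a) the first sequence is exact at M (im α = ker β), (b) the two complexes agree modulo m^{c+1}, i.e., (α − α')(L) ⊆ m^{c+1}M and (β − β')(M) ⊆ m^{c+1}N, and (c) the condition (AR)_c holds for α and for β. Then for every n ≥ 0 one has the equality of submodules of N: m^{n+1}N + (β(M) ∩ m^n N) = m^{n+1}N + (β'(M) ∩ m^n N). Consequently, for every n ≥ 0 the n-th graded pieces Gr_m(coker β)_n = m^n N/(m^{n+1}N + β(M) ∩ m^n N) and Gr_m(coker β')_n = m^n N/(m^{n+1}N + β'(M) ∩ m^n N) are isomorphic, and there is an isomorphism Gr_m(coker β) ≅ Gr_m(coker β') of graded Gr_m(A)-modules. -/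
open IsLocalRing

/-- The `n`-th graded piece `𝔪^n N / (𝔪^(n+1) N + β(M) ∩ 𝔪^n N)` of the associated graded
module `Gr_𝔪(coker β)` of the cokernel of `β : M → N`. -/
def GrCokerPiece {A : Type*} [CommRing A] [IsLocalRing A]
    {M N : Type*} [AddCommGroup M] [Module A M] [AddCommGroup N] [Module A N]
    (β : M →ₗ[A] N) (n : ℕ) : Type _ :=
  ↥((maximalIdeal A) ^ n • ⊤ : Submodule A N) ⧸
    (Submodule.comap ((maximalIdeal A) ^ n • ⊤ : Submodule A N).subtype
      (((maximalIdeal A) ^ (n + 1) • ⊤ : Submodule A N) ⊔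
        (LinearMap.range β ⊓ ((maximalIdeal A) ^ n • ⊤ : Submodule A N))))

noncomputable instance {A : Type*} [CommRing A] [IsLocalRing A]
    {M N : Type*} [AddCommGroup M] [Module A M] [AddCommGroup N] [Module A N]
    (β : M →ₗ[A] N) (n : ℕ) : AddCommGroup (GrCokerPiece β n) :=
  inferInstanceAs (AddCommGroup (_ ⧸ _))

noncomputable instance {A : Type*} [CommRing A] [IsLocalRing A]
    {M N : Type*} [AddCommGroup M] [Module A M] [AddCommGroup N] [Module A N]
    (β : M →ₗ[A] N) (n : ℕ) : Module A (GrCokerPiece β n) :=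
  inferInstanceAs (Module A (_ ⧸ _))

section Aux

variable {A : Type*} [CommRing A] [IsLocalRing A]
variable {M N : Type*} [AddCommGroup M] [Module A M] [AddCommGroup N] [Module A N]

/-- If `range φ ≤ J • ⊤`, then `φ(I • ⊤) ≤ I • J • ⊤`. -/
theorem map_smul_top_le_of_range_le (φ : M →ₗ[A] N) (I J : Ideal A)
    (h : LinearMap.range φ ≤ J • ⊤) :
    Submodule.map φ (I • ⊤) ≤ I • J • (⊤ : Submodule A N) := by
  rw [Submodule.map_smul'']
  exact smul_mono_right _ (le_trans (le_of_eq (Submodule.map_top φ)) h)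

theorem pow_smul_mono {a b : ℕ} (h : a ≤ b) :
    ((maximalIdeal A) ^ b • ⊤ : Submodule A N) ≤ (maximalIdeal A) ^ a • ⊤ :=
  Submodule.smul_mono_left (Ideal.pow_le_pow_right h)

theorem pow_smul_pow_smul_top (a b : ℕ) :
    ((maximalIdeal A) ^ a • (maximalIdeal A) ^ b • ⊤ : Submodule A N) =
      (maximalIdeal A) ^ (a + b) • ⊤ := by
  rw [← Submodule.smul_assoc, smul_eq_mul, ← pow_add]

/-- A map congruent to zero mod `𝔪^(c+1)` sends `𝔪^k • ⊤` into `𝔪^(k+c+1) • ⊤`. -/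
theorem map_diff_pow_smul (φ : M →ₗ[A] N) (c : ℕ)
    (h : ∀ x : M, φ x ∈ ((maximalIdeal A) ^ (c + 1) • ⊤ : Submodule A N))
    {k : ℕ} {m : M} (hm : m ∈ ((maximalIdeal A) ^ k • ⊤ : Submodule A M)) :
    φ m ∈ ((maximalIdeal A) ^ (k + (c + 1)) • ⊤ : Submodule A N) := by
  rw [← pow_smul_pow_smul_top]
  exact map_smul_top_le_of_range_le φ _ _ (by rintro _ ⟨x, rfl⟩; exact h x) ⟨m, hm, rfl⟩

/-- The half of the key inclusion that only uses the Artin–Rees condition for `φ`. -/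
theorem incl_aux (c : ℕ) (φ ψ : M →ₗ[A] N)
    (hφψ : ∀ x : M, φ x - ψ x ∈ ((maximalIdeal A) ^ (c + 1) • ⊤ : Submodule A N))
    (hAR : ArtinReesCond c φ) (n : ℕ) :
    LinearMap.range φ ⊓ ((maximalIdeal A) ^ n • ⊤ : Submodule A N) ≤
      ((maximalIdeal A) ^ (n + 1) • ⊤ : Submodule A N) ⊔
        (LinearMap.range ψ ⊓ ((maximalIdeal A) ^ n • ⊤ : Submodule A N)) := by
  have key : ∀ (m : M), φ m ∈ ((maximalIdeal A) ^ n • ⊤ : Submodule A N) →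
      φ m - ψ m ∈ ((maximalIdeal A) ^ (n + 1) • ⊤ : Submodule A N) →
      φ m ∈ ((maximalIdeal A) ^ (n + 1) • ⊤ : Submodule A N) ⊔
        (LinearMap.range ψ ⊓ ((maximalIdeal A) ^ n • ⊤ : Submodule A N)) := by
    intro m hφm hd
    have hψm : ψ m ∈ ((maximalIdeal A) ^ n • ⊤ : Submodule A N) := by
      have := Submodule.sub_mem _ hφm (pow_smul_mono (Nat.le_succ n) hd)
      simpa using this
    have heq : φ m = (φ m - ψ m) + ψ m := by abel
    rw [heq]
    exact Submodule.add_mem _ (Submodule.mem_sup_left hd)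
      (Submodule.mem_sup_right ⟨⟨m, rfl⟩, hψm⟩)
  rcases le_or_gt n c with hnc | hcn
  · rintro x ⟨⟨m, rfl⟩, hx⟩
    exact key m hx (pow_smul_mono (by omega) (hφψ m))
  · rintro x hx
    obtain ⟨m, hm, hmx⟩ := hAR n (le_of_lt hcn) hx
    subst hmx
    have hd : φ m - ψ m ∈ ((maximalIdeal A) ^ (n + 1) • ⊤ : Submodule A N) := by
      have := map_diff_pow_smul (φ - ψ) c (fun x => hφψ x) hm
      have he : n - c + (c + 1) = n + 1 := by omega
      rw [he] at this
      simpa using this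
    exact key m hx.2 hd

end Aux

section Main

variable {A : Type*} [CommRing A] [IsLocalRing A]
variable {L M N : Type*} [AddCommGroup L] [Module A L] [AddCommGroup M] [Module A M]
  [AddCommGroup N] [Module A N]

/-- Under the hypotheses of Lemma 2.5, the Artin–Rees condition also holds for `β'`. -/
theorem artinRees_of_congr (α α' : L →ₗ[A] M) (β β' : M →ₗ[A] N)
    (hcx' : β'.comp α' = 0) (c : ℕ)
    (hexact : LinearMap.range α = LinearMap.ker β)
    (hα : ∀ x : L, α x - α' x ∈ ((maximalIdeal A) ^ (c + 1) • ⊤ : Submodule A M))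
    (hβ : ∀ x : M, β x - β' x ∈ ((maximalIdeal A) ^ (c + 1) • ⊤ : Submodule A N))
    (hARα : ArtinReesCond c α) (hARβ : ArtinReesCond c β) :
    ArtinReesCond c β' := by
  intro n hn x hx
  -- by induction, lift `x` to `𝔪^k M` for every `k ≤ n - c`
  suffices h : ∀ k : ℕ, k ≤ n - c → ∃ m ∈ ((maximalIdeal A) ^ k • ⊤ : Submodule A M), β' m = x by
    obtain ⟨m, hm, hmx⟩ := h (n - c) le_rfl
    exact ⟨m, hm, hmx⟩
  intro k
  induction k with
  | zero =>
    intro _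
    obtain ⟨m, hmx⟩ := hx.1
    exact ⟨m, by simp, hmx⟩
  | succ k ih =>
    intro hk
    obtain ⟨m, hm, hmx⟩ := ih (by omega)
    -- β m lies in 𝔪^(k+c+1) N
    have hβm : β m ∈ ((maximalIdeal A) ^ (k + (c + 1)) • ⊤ : Submodule A N) := by
      have h1 : β m - β' m ∈ ((maximalIdeal A) ^ (k + (c + 1)) • ⊤ : Submodule A N) :=
        map_diff_pow_smul (β - β') c (fun x => hβ x) hm
      have h2 : β' m ∈ ((maximalIdeal A) ^ (k + (c + 1)) • ⊤ : Submodule A N) := by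
        rw [hmx]
        exact pow_smul_mono (by omega) hx.2
      have := Submodule.add_mem _ h1 h2
      simpa using this
    -- Artin–Rees for β : β m = β m₁ with m₁ ∈ 𝔪^(k+1) M
    have hβm' : β m ∈ Submodule.map β ((maximalIdeal A) ^ (k + (c + 1) - c) • ⊤) :=
      hARβ (k + (c + 1)) (by omega) ⟨⟨m, rfl⟩, hβm⟩
    have hkc : k + (c + 1) - c = k + 1 := by omega
    rw [hkc] at hβm'
    obtain ⟨m₁, hm₁, hβm₁⟩ := hβm'
    -- m - m₁ ∈ ker β = range α
    have hker : m - m₁ ∈ LinearMap.ker β := by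
      rw [LinearMap.mem_ker, map_sub, hβm₁, sub_self]
    rw [← hexact] at hker
    -- choose a preimage l₀ with (α - α') l₀ ∈ 𝔪^(k+1) M
    have hl : ∃ l : L, α l = m - m₁ ∧
        α l - α' l ∈ ((maximalIdeal A) ^ (k + 1) • ⊤ : Submodule A M) := by
      rcases lt_or_ge k c with hkc' | hkc'
      · obtain ⟨l, hl⟩ := hker
        exact ⟨l, hl, pow_smul_mono (by omega) (hα l)⟩
      · have hmm₁ : m - m₁ ∈ ((maximalIdeal A) ^ k • ⊤ : Submodule A M) :=
          Submodule.sub_mem _ hm (pow_smul_mono (Nat.le_succ k) hm₁)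
        have := hARα k hkc' ⟨hker, hmm₁⟩
        obtain ⟨l, hlmem, hl⟩ := this
        refine ⟨l, hl, ?_⟩
        have := map_diff_pow_smul (α - α') c (fun x => hα x) hlmem
        have he : k - c + (c + 1) = k + 1 := by omega
        rw [he] at this
        simpa using this
    obtain ⟨l, hl, hdl⟩ := hl
    refine ⟨m₁ + (α l - α' l), Submodule.add_mem _ hm₁ hdl, ?_⟩
    -- β' (m₁ + (α l - α' l)) = β' (m₁ + α l) = β' m = x
    have hβ'α' : β' (α' l) = 0 := by
      have := LinearMap.congr_fun hcx' l
      simpa using this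
    rw [← hmx]
    have : m = m₁ + α l := by rw [hl]; abel
    rw [this]
    simp [map_add, map_sub, hβ'α']

end Main

/-- Lemma 2.5(3): under the hypotheses of Lemma 2.5, for every `n ≥ 0` one has
`𝔪^(n+1) N + (β(M) ∩ 𝔪^n N) = 𝔪^(n+1) N + (β'(M) ∩ 𝔪^n N)` as submodules of `N`;
consequently the `n`-th graded pieces of `Gr_𝔪(coker β)` and `Gr_𝔪(coker β')` are
isomorphic for every `n`. -/
theorem lemma_2_5_part3 {A : Type*} [CommRing A] [IsLocalRing A] [IsNoetherianRing A]
    {L M N : Type*} [AddCommGroup L] [Module A L] [AddCommGroup M] [Module A M]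
    [AddCommGroup N] [Module A N]
    [Module.Finite A L] [Module.Finite A M] [Module.Finite A N]
    (α α' : L →ₗ[A] M) (β β' : M →ₗ[A] N)
    (hcx : β.comp α = 0) (hcx' : β'.comp α' = 0)
    (c : ℕ) (hc : 0 < c)
    (hexact : LinearMap.range α = LinearMap.ker β)
    (hα : ∀ x : L, α x - α' x ∈ ((maximalIdeal A) ^ (c + 1) • ⊤ : Submodule A M))
    (hβ : ∀ x : M, β x - β' x ∈ ((maximalIdeal A) ^ (c + 1) • ⊤ : Submodule A N))
    (hARα : ArtinReesCond c α) (hARβ : ArtinReesCond c β) :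
    (∀ n : ℕ,
      ((maximalIdeal A) ^ (n + 1) • ⊤ : Submodule A N) ⊔
          (LinearMap.range β ⊓ ((maximalIdeal A) ^ n • ⊤ : Submodule A N)) =
        ((maximalIdeal A) ^ (n + 1) • ⊤ : Submodule A N) ⊔
          (LinearMap.range β' ⊓ ((maximalIdeal A) ^ n • ⊤ : Submodule A N))) ∧
    (∀ n : ℕ, Nonempty (GrCokerPiece β n ≃ₗ[A] GrCokerPiece β' n)) := by
  have part1 : ∀ n : ℕ,
      ((maximalIdeal A) ^ (n + 1) • ⊤ : Submodule A N) ⊔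
          (LinearMap.range β ⊓ ((maximalIdeal A) ^ n • ⊤ : Submodule A N)) =
        ((maximalIdeal A) ^ (n + 1) • ⊤ : Submodule A N) ⊔
          (LinearMap.range β' ⊓ ((maximalIdeal A) ^ n • ⊤ : Submodule A N)) := by
    have hARβ' : ArtinReesCond c β' :=
      artinRees_of_congr α α' β β' hcx' c hexact hα hβ hARα hARβ
    intro n
    refine le_antisymm (sup_le le_sup_left ?_) (sup_le le_sup_left ?_)
    · exact incl_aux c β β' hβ hARβ n
    · exact incl_aux c β' β (fun x => by simpa using Submodule.neg_mem _ (hβ x)) hARβ' n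
  refine ⟨part1, fun n => ⟨Submodule.quotEquivOfEq _ _ (by rw [part1 n])⟩⟩
end

section
/- Claim in the proof of Lemma 2.5: Let (A, m) be a local noetherian ring, let L →^α M →^β N and L →^{α'} M →^{β'} N be two complexes of finite A-modules (i.e., β∘α = 0 and β'∘α' = 0), and let c be a positive integer. Assume that (a) the first sequence is exact at M (im α = ker β), (b) the two complexes agree modulo m^{c+1}, i.e., (α − α')(L) ⊆ m^{c+1}M and (β − β')(M) ⊆ m^{c+1}N, and (c) the condition (AR)_c holds for α and for β. Then for every n ≥ c one has (β')^{-1}(m^n N) ⊆ α'(L) + m^{n−c}M. -/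
open IsLocalRing

lemma aux_pow_smul {A : Type*} [CommRing A] {M : Type*} [AddCommGroup M] [Module A M]
    (I : Ideal A) (a b : ℕ) (P : Submodule A M) :
    I ^ a • I ^ b • P = I ^ (a + b) • P := by
  rw [pow_add, ← smul_eq_mul, Submodule.smul_assoc]

lemma aux_map_mem {A : Type*} [CommRing A] {M N : Type*} [AddCommGroup M] [Module A M]
    [AddCommGroup N] [Module A N] (φ : M →ₗ[A] N) (I J : Ideal A)
    (h : ∀ x : M, φ x ∈ (J • ⊤ : Submodule A N)) {z : M}
    (hz : z ∈ (I • ⊤ : Submodule A M)) :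
    φ z ∈ (I • J • ⊤ : Submodule A N) := by
  have h1 : φ z ∈ Submodule.map φ (I • ⊤ : Submodule A M) := Submodule.mem_map_of_mem hz
  rw [Submodule.map_smul''] at h1
  have h2 : Submodule.map φ ⊤ ≤ (J • ⊤ : Submodule A N) := by
    rintro _ ⟨x, -, rfl⟩; exact h x
  exact smul_mono_right I h2 h1

lemma aux_pow_le {A : Type*} [CommRing A] {M : Type*} [AddCommGroup M] [Module A M]
    (I : Ideal A) {a b : ℕ} (hab : a ≤ b) :
    (I ^ b • ⊤ : Submodule A M) ≤ I ^ a • ⊤ :=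
  Submodule.smul_mono_left (Ideal.pow_le_pow_right hab)

/-- The claim in the proof of Lemma 2.5: for every `n ≥ c`,
`(β')⁻¹(𝔪^n N) ⊆ α'(L) + 𝔪^(n-c) M`. -/
theorem claim_in_proof_of_lemma_2_5 {A : Type*} [CommRing A] [IsLocalRing A] [IsNoetherianRing A]
    {L M N : Type*} [AddCommGroup L] [Module A L] [AddCommGroup M] [Module A M]
    [AddCommGroup N] [Module A N]
    [Module.Finite A L] [Module.Finite A M] [Module.Finite A N]
    (α α' : L →ₗ[A] M) (β β' : M →ₗ[A] N)
    (hcx : β.comp α = 0) (hcx' : β'.comp α' = 0)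
    (c : ℕ) (hc : 0 < c)
    (hexact : LinearMap.range α = LinearMap.ker β)
    (hα : ∀ x : L, α x - α' x ∈ ((maximalIdeal A) ^ (c + 1) • ⊤ : Submodule A M))
    (hβ : ∀ x : M, β x - β' x ∈ ((maximalIdeal A) ^ (c + 1) • ⊤ : Submodule A N))
    (hARα : ArtinReesCond c α) (hARβ : ArtinReesCond c β) :
    ∀ n : ℕ, c ≤ n →
      Submodule.comap β' ((maximalIdeal A) ^ n • ⊤ : Submodule A N) ≤
        LinearMap.range α' ⊔ ((maximalIdeal A) ^ (n - c) • ⊤ : Submodule A M) := by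
  set I := maximalIdeal A with hI
  intro n hn
  induction n, hn using Nat.le_induction with
  | base =>
    have : c - c = 0 := Nat.sub_self c
    rw [this, pow_zero, Ideal.one_eq_top, Submodule.top_smul]
    exact le_sup_of_le_right le_top
  | succ n hn IH =>
    intro x hx
    -- hx : β' x ∈ I ^ (n+1) • ⊤
    have hx0 : β' x ∈ (I ^ (n + 1) • ⊤ : Submodule A N) := hx
    have hxn : x ∈ Submodule.comap β' ((I : Ideal A) ^ n • ⊤ : Submodule A N) :=
      aux_pow_le I (Nat.le_succ n) hx0
    obtain ⟨y', hy', z, hz, hxyz⟩ := Submodule.mem_sup.mp (IH hxn)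
    obtain ⟨y, rfl⟩ := hy'
    -- β' z ∈ I^(n+1) • ⊤
    have hβ'z : β' z ∈ (I ^ (n + 1) • ⊤ : Submodule A N) := by
      have hβ'α' : β' (α' y) = 0 := by
        have := LinearMap.congr_fun hcx' y
        simpa using this
      have : β' z = β' x := by
        have : β' x = β' (α' y) + β' z := by rw [← map_add, hxyz]
        rw [this, hβ'α', zero_add]
      rw [this]; exact hx0
    -- (β - β') z ∈ I^(n+1) • ⊤
    have hsub : (β - β') z ∈ (I ^ (n + 1) • ⊤ : Submodule A N) := by
      have := aux_map_mem (β - β') (I ^ (n - c)) (I ^ (c + 1))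
        (fun x => hβ x) hz
      rw [aux_pow_smul] at this
      have he : n - c + (c + 1) = n + 1 := by omega
      rwa [he] at this
    have hβz : β z ∈ (I ^ (n + 1) • ⊤ : Submodule A N) := by
      have : β z = β' z + (β - β') z := by simp
      rw [this]; exact Submodule.add_mem _ hβ'z hsub
    -- Artin-Rees for β
    have hmem : β z ∈ LinearMap.range β ⊓ (I ^ (n + 1) • ⊤ : Submodule A N) :=
      ⟨⟨z, rfl⟩, hβz⟩
    obtain ⟨w, hw, hwz⟩ := hARβ (n + 1) (by omega) hmem
    -- hw : w ∈ I^(n+1-c) • ⊤, hwz : β w = β z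
    have hker : z - w ∈ LinearMap.ker β := by
      simp [LinearMap.mem_ker, map_sub, hwz]
    rw [← hexact] at hker
    obtain ⟨u, hu⟩ := hker
    -- x = α' y + z = α' y + w + α u
    have hxform : x = α' y + w + α u := by rw [hu, ← hxyz]; abel
    by_cases hcase : n + 1 - c ≤ c + 1
    · -- small case: (α - α') u ∈ I^(c+1) • ⊤ ≤ I^(n+1-c) • ⊤
      have h1 : (α - α') u ∈ (I ^ (n + 1 - c) • ⊤ : Submodule A M) :=
        aux_pow_le I hcase (hα u)
      have hx2 : x = α' (y + u) + ((α - α') u + w) := by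
        rw [map_add, hxform]; simp [sub_smul]; abel
      rw [hx2]
      exact Submodule.add_mem_sup ⟨y + u, rfl⟩
        (Submodule.add_mem _ h1 (aux_pow_le I (le_refl _) hw))
    · -- big case: use Artin-Rees for α
      push_neg at hcase
      have hnc : c ≤ n - c := by omega
      have hαu : α u ∈ (I ^ (n - c) • ⊤ : Submodule A M) := by
        have hzw : z - w ∈ (I ^ (n - c) • ⊤ : Submodule A M) :=
          Submodule.sub_mem _ hz (aux_pow_le I (by omega) hw)
        rwa [← hu] at hzw
      have hmem2 : α u ∈ LinearMap.range α ⊓ (I ^ (n - c) • ⊤ : Submodule A M) :=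
        ⟨⟨u, rfl⟩, hαu⟩
      obtain ⟨u', hu', hu'u⟩ := hARα (n - c) hnc hmem2
      -- hu' : u' ∈ I^(n-c-c) • ⊤, hu'u : α u' = α u
      have h1 : (α - α') u' ∈ (I ^ (n + 1 - c) • ⊤ : Submodule A M) := by
        have := aux_map_mem (α - α') (I ^ (n - c - c)) (I ^ (c + 1))
          (fun x => hα x) hu'
        rw [aux_pow_smul] at this
        have he : n - c - c + (c + 1) = n + 1 - c := by omega
        rwa [he] at this
      have hx2 : x = α' (y + u') + ((α - α') u' + w) := by
        rw [map_add, hxform, ← hu'u]; simp [sub_smul]; abel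
      rw [hx2]
      exact Submodule.add_mem_sup ⟨y + u', rfl⟩
        (Submodule.add_mem _ h1 hw)
end
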